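/- For n ≥ 16 there exist N > 2^{n/8} points ξ_0, …, ξ_{N−1} in the hypercube {−1, +1}ⁿ such that ‖ξ_i − ξ_j‖² ≥ n/2 for all i ≠ j. -/

import Mathlib

open Finset

private lemma vg_ball_card (n r : ℕ) (s : Fin n → Bool) :
    ((univ.filter (fun y : Fin n → Bool => hammingDist y s ≤ r)).card
      ≤ ∑ k ∈ range (r+1), n.choose k) := by
  classical
  have h := Finset.card_le_card_of_injOn
    (f := fun y : Fin n → Bool => univ.filter (fun i => y i ≠ s i))
    (s := univ.filter (fun y : Fin n → Bool => hammingDist y s ≤ r))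
    (t := (range (r+1)).biUnion (fun k => Finset.powersetCard k (univ : Finset (Fin n))))
    ?_ ?_
  · refine h.trans ?_
    refine (Finset.card_biUnion_le).trans ?_
    apply Finset.sum_le_sum
    intro k _
    simp [Finset.card_powersetCard]
  · intro y hy
    simp only [Finset.mem_coe, mem_filter, mem_univ, true_and] at hy
    simp only [Finset.mem_coe, mem_biUnion, mem_range, Finset.mem_powersetCard]
    exact ⟨hammingDist y s, Nat.lt_succ_of_le hy, Finset.filter_subset _ _, rfl⟩
  · intro a _ b _ hab
    funext i
    have : (i ∈ univ.filter (fun i => a i ≠ s i)) = (i ∈ univ.filter (fun i => b i ≠ s i)) := by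
      simp only at hab; rw [hab]
    simp only [mem_filter, mem_univ, true_and, eq_iff_iff] at this
    by_cases h : a i = s i
    · by_cases h' : b i = s i
      · rw [h, h']
      · exact absurd (this.mpr h') (by simp [h])
    · have h' : ¬ b i = s i := this.mp h
      revert h h'; cases a i <;> cases b i <;> cases s i <;> simp

private lemma vg_sum_bound (n r : ℕ) (hn : 16 ≤ n) (hr : 8 * r ≤ n) :
    (∑ k ∈ range (r+1), (n.choose k : ℝ)) < (2:ℝ) ^ ((7 * (n:ℝ)) / 8) := by
  have h1 : (∑ k ∈ range (r+1), (n.choose k : ℝ))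
      ≤ (2:ℝ)^r * (3/2)^n := by
    have step1 : (∑ k ∈ range (r+1), (n.choose k : ℝ))
        ≤ ∑ k ∈ range (r+1), (n.choose k : ℝ) * ((2:ℝ)^r * (1/2)^k) := by
      apply Finset.sum_le_sum
      intro k hk
      have hk' : k ≤ r := Nat.lt_succ_iff.mp (mem_range.mp hk)
      have : (1:ℝ) ≤ (2:ℝ)^r * (1/2)^k := by
        rw [one_div, inv_pow, ← div_eq_mul_inv, le_div_iff₀ (by positivity), one_mul]
        exact pow_le_pow_right₀ (by norm_num) hk'
      nlinarith [(Nat.cast_nonneg (n.choose k) : (0:ℝ) ≤ (n.choose k : ℝ))]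
    have step2 : (∑ k ∈ range (r+1), (n.choose k : ℝ) * ((2:ℝ)^r * (1/2)^k))
        ≤ ∑ k ∈ range (n+1), (n.choose k : ℝ) * ((2:ℝ)^r * (1/2)^k) := by
      apply Finset.sum_le_sum_of_subset_of_nonneg
      · exact Finset.range_subset_range.mpr (by omega)
      · intro k _ _; positivity
    have step3 : ∑ k ∈ range (n+1), (n.choose k : ℝ) * ((2:ℝ)^r * (1/2)^k)
        = (2:ℝ)^r * (3/2)^n := by
      have := add_pow (1/2 : ℝ) 1 n
      simp only [one_pow, mul_one] at this
      rw [show (3/2:ℝ) = 1/2 + 1 by norm_num, this, Finset.mul_sum]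
      apply Finset.sum_congr rfl
      intro k _; ring
    calc _ ≤ _ := step1
      _ ≤ _ := step2
      _ = _ := step3
  have h2 : (2:ℝ)^r ≤ (2:ℝ) ^ ((n:ℝ)/8) := by
    rw [← Real.rpow_natCast 2 r]
    apply Real.rpow_le_rpow_of_exponent_le (by norm_num)
    have : (8:ℝ) * r ≤ n := by exact_mod_cast hr
    linarith
  have h3 : ((3:ℝ)/2)^n < (2:ℝ) ^ ((3 * (n:ℝ))/4) := by
    have hb : (0:ℝ) < (2:ℝ) ^ ((3 * (n:ℝ))/4) := Real.rpow_pos_of_pos (by norm_num) _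
    apply lt_of_pow_lt_pow_left₀ 4 hb.le
    have lhs : (((3:ℝ)/2)^n)^4 = ((81:ℝ)/16)^n := by
      rw [← pow_mul, mul_comm, pow_mul]; norm_num
    have rhs : ((2:ℝ) ^ ((3 * (n:ℝ))/4))^4 = (8:ℝ)^n := by
      rw [← Real.rpow_natCast ((2:ℝ) ^ ((3 * (n:ℝ))/4)) 4, ← Real.rpow_mul (by norm_num)]
      have : (3 * (n:ℝ))/4 * (4:ℕ) = 3 * n := by push_cast; ring
      rw [this, show (3:ℝ) * n = (n:ℝ) * 3 by ring, Real.rpow_mul (by norm_num),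
        Real.rpow_natCast]
      rw [show ((3:ℝ)) = ((3:ℕ):ℝ) by norm_num, Real.rpow_natCast, ← pow_mul, mul_comm, pow_mul]
      norm_num
    rw [lhs, rhs]
    exact pow_lt_pow_left₀ (by norm_num) (by norm_num) (by omega)
  calc (∑ k ∈ range (r+1), (n.choose k : ℝ)) ≤ (2:ℝ)^r * (3/2)^n := h1
    _ < (2:ℝ) ^ ((n:ℝ)/8) * (2:ℝ) ^ ((3 * (n:ℝ))/4) := by
        apply mul_lt_mul' h2 h3 (by positivity) (Real.rpow_pos_of_pos (by norm_num) _)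
    _ = (2:ℝ) ^ ((7 * (n:ℝ)) / 8) := by
        rw [← Real.rpow_add (by norm_num)]; ring_nf

private lemma vg_max_code (n d : ℕ) (hd : 1 ≤ d) :
    ∃ S : Finset (Fin n → Bool),
      (∀ a ∈ S, ∀ b ∈ S, a ≠ b → d ≤ hammingDist a b) ∧
      (∀ y : Fin n → Bool, ∃ s ∈ S, hammingDist y s ≤ d - 1) := by
  classical
  set 𝒜 := (univ : Finset (Finset (Fin n → Bool))).filter
      (fun S => ∀ a ∈ S, ∀ b ∈ S, a ≠ b → d ≤ hammingDist a b) with h𝒜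
  have hne : 𝒜.Nonempty := ⟨∅, by simp [h𝒜]⟩
  obtain ⟨S, hS, hmax⟩ := 𝒜.exists_max_image Finset.card hne
  simp only [h𝒜, mem_filter, mem_univ, true_and] at hS
  refine ⟨S, hS, ?_⟩
  intro y
  by_contra hcon
  push_neg at hcon
  have hfar : ∀ s ∈ S, d ≤ hammingDist y s := by
    intro s hs; have := hcon s hs; omega
  have hyS : y ∉ S := by
    intro hy
    have := hfar y hy
    simp [hammingDist_self] at this; omega
  have hins : insert y S ∈ 𝒜 := by
    simp only [h𝒜, mem_filter, mem_univ, true_and]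
    intro a ha b hb hab
    rcases Finset.mem_insert.mp ha with rfl | ha'
    · rcases Finset.mem_insert.mp hb with rfl | hb'
      · exact absurd rfl hab
      · exact hfar b hb'
    · rcases Finset.mem_insert.mp hb with rfl | hb'
      · rw [hammingDist_comm]; exact hfar a ha'
      · exact hS a ha' b hb' hab
  have := hmax _ hins
  rw [Finset.card_insert_of_notMem hyS] at this
  omega

noncomputable def vgToPt (n : ℕ) (b : Fin n → Bool) : EuclideanSpace ℝ (Fin n) :=
  WithLp.toLp 2 (fun k : Fin n => if b k then (1:ℝ) else -1)

private lemma vgToPt_dist (n : ℕ) (a b : Fin n → Bool) :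
    ‖vgToPt n a - vgToPt n b‖ ^ 2 = 4 * hammingDist a b := by
  have h1 : ‖vgToPt n a - vgToPt n b‖^2 = ∑ k, ‖(vgToPt n a - vgToPt n b) k‖^2 := by
    rw [EuclideanSpace.norm_eq, Real.sq_sqrt (by positivity)]
  rw [h1]
  have h2 : ∀ k, ‖(vgToPt n a - vgToPt n b) k‖^2 = if a k ≠ b k then (4:ℝ) else 0 := by
    intro k
    have : (vgToPt n a - vgToPt n b) k = vgToPt n a k - vgToPt n b k := rfl
    rw [this, Real.norm_eq_abs, sq_abs]
    simp only [vgToPt]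
    cases h : a k <;> cases h' : b k <;> norm_num
  simp only [h2]
  rw [Finset.sum_ite, Finset.sum_const, Finset.sum_const]
  simp only [smul_eq_mul, mul_zero, add_zero, hammingDist]
  rw [mul_comm]
  norm_num

theorem varshamov_gilbert_packing
    (n : ℕ) (hn : 16 ≤ n) :
    ∃ (N : ℕ) (ξ : Fin N → EuclideanSpace ℝ (Fin n)),
      (2 : ℝ) ^ ((n : ℝ) / 8) < N ∧
      (∀ i k, ξ i k = 1 ∨ ξ i k = -1) ∧
      ∀ i j, i ≠ j → (n : ℝ) / 2 ≤ ‖ξ i - ξ j‖ ^ 2 := by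
  classical
  set d : ℕ := n / 8 + 1 with hd_def
  set r : ℕ := n / 8 with hr_def
  obtain ⟨S, hSdist, hScover⟩ := vg_max_code n d (by omega)
  have hr_eq : d - 1 = r := by omega
  -- counting: 2^n ≤ S.card * V
  set V : ℕ := ∑ k ∈ range (r+1), n.choose k with hV_def
  have hcount : 2 ^ n ≤ S.card * V := by
    have hcover : (univ : Finset (Fin n → Bool)) ⊆
        S.biUnion (fun s => univ.filter (fun y => hammingDist y s ≤ r)) := by
      intro y _
      obtain ⟨s, hs, hds⟩ := hScover y
      rw [hr_eq] at hds
      exact Finset.mem_biUnion.mpr ⟨s, hs, by simp [hds]⟩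
    have h1 : (univ : Finset (Fin n → Bool)).card = 2 ^ n := by
      simp [Finset.card_univ]
    calc 2 ^ n = (univ : Finset (Fin n → Bool)).card := h1.symm
      _ ≤ (S.biUnion (fun s => univ.filter (fun y => hammingDist y s ≤ r))).card :=
          Finset.card_le_card hcover
      _ ≤ ∑ s ∈ S, (univ.filter (fun y : Fin n → Bool => hammingDist y s ≤ r)).card :=
          Finset.card_biUnion_le
      _ ≤ ∑ _s ∈ S, V := Finset.sum_le_sum (fun s _ => vg_ball_card n r s)
      _ = S.card * V := by rw [Finset.sum_const, smul_eq_mul]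
  have hVpos : 0 < V := by
    have h0 : (0:ℕ) ∈ range (r+1) := mem_range.mpr (by omega)
    have := Finset.single_le_sum (f := fun k => n.choose k) (fun k _ => Nat.zero_le _) h0
    simpa [hV_def] using Nat.lt_of_lt_of_le (by norm_num) this
  have hVlt : (V:ℝ) < (2:ℝ) ^ ((7 * (n:ℝ)) / 8) := by
    have : (V:ℝ) = ∑ k ∈ range (r+1), (n.choose k : ℝ) := by push_cast [hV_def]; ring
    rw [this]
    exact vg_sum_bound n r hn (by omega)
  -- N bound
  have hNbig : (2:ℝ) ^ ((n:ℝ)/8) < S.card := by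
    have key : (2:ℝ) ^ ((n:ℝ)/8) * V < (S.card : ℝ) * V := by
      calc (2:ℝ) ^ ((n:ℝ)/8) * V
          < (2:ℝ) ^ ((n:ℝ)/8) * (2:ℝ) ^ ((7 * (n:ℝ)) / 8) := by
            apply mul_lt_mul_of_pos_left hVlt (Real.rpow_pos_of_pos (by norm_num) _)
        _ = (2:ℝ) ^ (n:ℝ) := by rw [← Real.rpow_add (by norm_num)]; ring_nf
        _ = ((2 ^ n : ℕ) : ℝ) := by rw [Real.rpow_natCast]; push_cast; ring
        _ ≤ (S.card : ℝ) * V := by exact_mod_cast hcount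
    exact lt_of_mul_lt_mul_right key (Nat.cast_nonneg V)
  -- build ξ
  set N := S.card with hN_def
  set e := S.equivFin.symm with he_def
  refine ⟨N, fun i => vgToPt n ((e i : Fin n → Bool)), hNbig, ?_, ?_⟩
  · intro i k
    by_cases h : (e i : Fin n → Bool) k <;> simp [vgToPt, h]
  · intro i j hij
    have hne : (e i : Fin n → Bool) ≠ (e j : Fin n → Bool) := by
      intro h
      exact hij (e.injective (Subtype.ext h))
    have hdist : d ≤ hammingDist (e i : Fin n → Bool) (e j : Fin n → Bool) :=
      hSdist _ (e i).2 _ (e j).2 hne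
    rw [vgToPt_dist]
    have hnd : (n:ℝ) < 8 * d := by
      have : n < 8 * d := by omega
      exact_mod_cast this
    have : (d:ℝ) ≤ hammingDist (e i : Fin n → Bool) (e j : Fin n → Bool) := by
      exact_mod_cast hdist
    linarith
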